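/- Let a, b, c, d be complex numbers with |a| = |b| = |c| = |d| = 1, and suppose ab ≠ cd, ac ≠ bd, ad ≠ bc. Set w1 := (ab(c+d) − cd(a+b))/(ab − cd), w2 := (ac(b+d) − bd(a+c))/(ac − bd), w3 := (ad(b+c) − bc(a+d))/(ad − bc). Then w2 is the orthocenter of the triangle with vertices 0, w1, w3; concretely, Re(w2 · conj(w3 − w1)) = 0 and Re((w2 − w1) · conj(w3 − 0)) = 0. -/

import Mathlib

set_option maxHeartbeats 4000000

open Complex

lemma conj_unit {a : ℂ} (ha : ‖a‖ = 1) : (starRingEnd ℂ) a = a⁻¹ := by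
  have h : a * (starRingEnd ℂ) a = 1 := by
    rw [Complex.mul_conj]; norm_cast
    rw [← Complex.sq_norm, ha]; norm_num
  exact eq_inv_of_mul_eq_one_right h

lemma re_zero_of {z : ℂ} (h : z + (starRingEnd ℂ) z = 0) : z.re = 0 := by
  have := congrArg Complex.re h
  simp [Complex.add_re, Complex.conj_re] at this
  linarith

lemma conj_w {a b c d : ℂ} (ha0 : a ≠ 0) (hb0 : b ≠ 0) (hc0 : c ≠ 0) (hd0 : d ≠ 0)
    (hca : (starRingEnd ℂ) a = a⁻¹) (hcb : (starRingEnd ℂ) b = b⁻¹)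
    (hcc : (starRingEnd ℂ) c = c⁻¹) (hcd : (starRingEnd ℂ) d = d⁻¹)
    (n1 : a * b - c * d ≠ 0) :
    (starRingEnd ℂ) ((a * b * (c + d) - c * d * (a + b)) / (a * b - c * d)) =
      (a + b - c - d) / (a * b - c * d) := by
  have m1 : a⁻¹ * b⁻¹ - c⁻¹ * d⁻¹ ≠ 0 := by
    rw [show a⁻¹ * b⁻¹ - c⁻¹ * d⁻¹ = (c * d - a * b) / (a * b * c * d) by
      field_simp]
    refine div_ne_zero ?_ (by simp [ha0, hb0, hc0, hd0])
    intro h; apply n1; linear_combination -h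
  simp only [map_div₀, map_sub, map_mul, map_add, hca, hcb, hcc, hcd]
  rw [div_eq_div_iff m1 n1]
  field_simp
  ring

/-- For `a, b, c, d` on the unit circle with `ab ≠ cd`, `ac ≠ bd`, `ad ≠ bc`,
the point `w2 = LIS[a,c,b,d]` is the orthocenter of the triangle `0, w1, w3`. -/
theorem orthocenter_of_intersections (a b c d : ℂ)
    (ha : ‖a‖ = 1) (hb : ‖b‖ = 1)
    (hc : ‖c‖ = 1) (hd : ‖d‖ = 1)
    (h1 : a * b ≠ c * d) (h2 : a * c ≠ b * d) (h3 : a * d ≠ b * c) :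
    let w1 := (a * b * (c + d) - c * d * (a + b)) / (a * b - c * d)
    let w2 := (a * c * (b + d) - b * d * (a + c)) / (a * c - b * d)
    let w3 := (a * d * (b + c) - b * c * (a + d)) / (a * d - b * c)
    ((w2 - 0) * (starRingEnd ℂ) (w3 - w1)).re = 0 ∧
    ((w2 - w1) * (starRingEnd ℂ) (w3 - 0)).re = 0 := by
  intro w1 w2 w3
  simp only [w1, w2, w3]
  have ha0 : a ≠ 0 := by intro h; simp [h] at ha
  have hb0 : b ≠ 0 := by intro h; simp [h] at hb
  have hc0 : c ≠ 0 := by intro h; simp [h] at hc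
  have hd0 : d ≠ 0 := by intro h; simp [h] at hd
  have hca := conj_unit ha
  have hcb := conj_unit hb
  have hcc := conj_unit hc
  have hcd := conj_unit hd
  have n1 : a * b - c * d ≠ 0 := sub_ne_zero.mpr h1
  have n2 : a * c - b * d ≠ 0 := sub_ne_zero.mpr h2
  have n3 : a * d - b * c ≠ 0 := sub_ne_zero.mpr h3
  have E1 := conj_w ha0 hb0 hc0 hd0 hca hcb hcc hcd n1
  have E2 := conj_w ha0 hc0 hb0 hd0 hca hcc hcb hcd n2
  have E3 := conj_w ha0 hd0 hb0 hc0 hca hcd hcb hcc n3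
  have F1 : (starRingEnd ℂ) ((a + b - c - d) / (a * b - c * d)) =
      (a * b * (c + d) - c * d * (a + b)) / (a * b - c * d) := by
    rw [← E1, Complex.conj_conj]
  have F2 : (starRingEnd ℂ) ((a + c - b - d) / (a * c - b * d)) =
      (a * c * (b + d) - b * d * (a + c)) / (a * c - b * d) := by
    rw [← E2, Complex.conj_conj]
  have F3 : (starRingEnd ℂ) ((a + d - b - c) / (a * d - b * c)) =
      (a * d * (b + c) - b * c * (a + d)) / (a * d - b * c) := by
    rw [← E3, Complex.conj_conj]
  constructor
  · apply re_zero_of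
    simp only [sub_zero, map_mul, map_sub, Complex.conj_conj, E1, E2, E3, F1, F2, F3]
    field_simp [show a * d - c * b ≠ 0 by rwa [mul_comm c b]]
    ring
  · apply re_zero_of
    simp only [sub_zero, map_mul, map_sub, Complex.conj_conj, E1, E2, E3, F1, F2, F3]
    field_simp
    ring
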